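/- For every odd positive integer p, the number T(p) of integer triangles with perimeter p equals the integer nearest to (p+3)²/48, i.e. T(p) = round((p+3)²/48). -/

import Mathlib

open Finset in
/-- Triangles with perimeter `p` as an explicit finset. -/
private def PA (p : ℕ) : Finset (ℕ × ℕ × ℕ) :=
  (range (p+1) ×ˢ range (p+1) ×ˢ range (p+1)).filter
    (fun t => 0 < t.1 ∧ t.1 ≤ t.2.1 ∧ t.2.1 ≤ t.2.2 ∧ t.2.2 < t.1 + t.2.1 ∧
      t.1 + t.2.1 + t.2.2 = p)

open Finset in
/-- Partitions of `n` into exactly 3 positive parts, largest first. -/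
private def PB (n : ℕ) : Finset (ℕ × ℕ × ℕ) :=
  (range (n+1) ×ˢ range (n+1) ×ˢ range (n+1)).filter
    (fun t => 1 ≤ t.2.2 ∧ t.2.2 ≤ t.2.1 ∧ t.2.1 ≤ t.1 ∧ t.1 + t.2.1 + t.2.2 = n)

open Finset in
/-- Triples `u ≥ v ≥ w ≥ 0` summing to `n`. -/
private def PC (n : ℕ) : Finset (ℕ × ℕ × ℕ) :=
  (range (n+1) ×ˢ range (n+1) ×ˢ range (n+1)).filter
    (fun t => t.2.2 ≤ t.2.1 ∧ t.2.1 ≤ t.1 ∧ t.1 + t.2.1 + t.2.2 = n)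

open Finset in
private lemma mem_PA {p : ℕ} {t : ℕ × ℕ × ℕ} :
    t ∈ PA p ↔ 0 < t.1 ∧ t.1 ≤ t.2.1 ∧ t.2.1 ≤ t.2.2 ∧ t.2.2 < t.1 + t.2.1 ∧
      t.1 + t.2.1 + t.2.2 = p := by
  simp [PA, mem_filter, mem_product, mem_range]; omega

open Finset in
private lemma mem_PB {n : ℕ} {t : ℕ × ℕ × ℕ} :
    t ∈ PB n ↔ 1 ≤ t.2.2 ∧ t.2.2 ≤ t.2.1 ∧ t.2.1 ≤ t.1 ∧ t.1 + t.2.1 + t.2.2 = n := by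
  simp [PB, mem_filter, mem_product, mem_range]; omega

open Finset in
private lemma mem_PC {n : ℕ} {t : ℕ × ℕ × ℕ} :
    t ∈ PC n ↔ t.2.2 ≤ t.2.1 ∧ t.2.1 ≤ t.1 ∧ t.1 + t.2.1 + t.2.2 = n := by
  simp [PC, mem_filter, mem_product, mem_range]; omega

open Finset in
private lemma PB_card_succ3 (n : ℕ) : (PB (n+3)).card = (PC n).card := by
  apply Finset.card_nbij' (fun t => (t.1 - 1, t.2.1 - 1, t.2.2 - 1))
    (fun t => (t.1 + 1, t.2.1 + 1, t.2.2 + 1))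
  · intro t ht; rw [Finset.mem_coe, mem_PB] at ht; rw [Finset.mem_coe, mem_PC]; dsimp; omega
  · intro t ht; rw [Finset.mem_coe, mem_PC] at ht; rw [Finset.mem_coe, mem_PB]; dsimp; omega
  · intro t ht; rw [Finset.mem_coe, mem_PB] at ht
    obtain ⟨a, b, c⟩ := t; simp at *; all_goals omega
  · intro t ht; rw [Finset.mem_coe, mem_PC] at ht
    obtain ⟨a, b, c⟩ := t; simp at *; all_goals omega

open Finset in
private lemma PC_card (n : ℕ) : (PC n).card = (PB n).card + (n / 2 + 1) := by
  classical
  have hsplit := Finset.card_filter_add_card_filter_not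
    (s := PC n) (p := fun t => 1 ≤ t.2.2)
  have h1 : (PC n).filter (fun t => 1 ≤ t.2.2) = PB n := by
    ext t; simp [mem_filter, mem_PB, mem_PC]; omega
  have h2 : ((PC n).filter (fun t => ¬ 1 ≤ t.2.2)).card = n / 2 + 1 := by
    rw [show ((PC n).filter (fun t => ¬ 1 ≤ t.2.2)).card = (range (n/2+1)).card from ?_]
    · rw [card_range]
    · apply Finset.card_nbij' (fun t => t.2.1) (fun v => (n - v, v, 0))
      · intro t ht; simp [mem_filter, mem_PC] at ht; simp [mem_range]; omega
      · intro v hv; simp [mem_range] at hv; simp [mem_filter, mem_PC]; omega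
      · intro t ht; simp [mem_filter, mem_PC] at ht
        obtain ⟨a, b, c⟩ := t; simp at *; all_goals omega
      · intro v hv; simp
  rw [h1] at hsplit
  omega

private lemma PB_step (n : ℕ) : (PB (n+3)).card = (PB n).card + (n / 2 + 1) := by
  rw [PB_card_succ3, PC_card]

private lemma arith_aux (n : ℕ) : ((n+3)*(n+3)+6)/12 = (n*n+6)/12 + (n/2 + 1) := by
  obtain ⟨q, r, hrlt, rfl⟩ : ∃ q r, r < 6 ∧ n = 6*q + r :=
    ⟨n/6, n%6, Nat.mod_lt _ (by norm_num), (Nat.div_add_mod n 6).symm⟩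
  interval_cases r <;>
    · ring_nf
      generalize q*q = K
      omega

private lemma PB_card (n : ℕ) : (PB n).card = (n*n+6)/12 := by
  induction n using Nat.strong_induction_on with
  | _ n ih =>
    match n with
    | 0 => decide
    | 1 => decide
    | 2 => decide
    | (m+3) => rw [PB_step, ih m (by omega), arith_aux]

open Finset in
private lemma PA_card_eq_PB (p : ℕ) (hodd : p % 2 = 1) :
    (PA p).card = (PB ((p+3)/2)).card := by
  apply Finset.card_nbij'
    (fun t => ((t.2.1 + t.2.2 + 1 - t.1)/2, (t.1 + t.2.2 + 1 - t.2.1)/2,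
      (t.1 + t.2.1 + 1 - t.2.2)/2))
    (fun t => (t.2.1 + t.2.2 - 1, t.1 + t.2.2 - 1, t.1 + t.2.1 - 1))
  · intro t ht; rw [Finset.mem_coe, mem_PA] at ht; rw [Finset.mem_coe, mem_PB]; dsimp; omega
  · intro t ht; rw [Finset.mem_coe, mem_PB] at ht; rw [Finset.mem_coe, mem_PA]; dsimp; omega
  · intro t ht; rw [Finset.mem_coe, mem_PA] at ht
    obtain ⟨a, b, c⟩ := t; simp at *; all_goals omega
  · intro t ht; rw [Finset.mem_coe, mem_PB] at ht
    obtain ⟨a, b, c⟩ := t; simp at *; all_goals omega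

/-- `T p` is the number of integer triangles with perimeter `p`:
unordered triples of positive integers `a ≤ b ≤ c` with `a + b + c = p`
and `c < a + b`. -/
noncomputable def T (p : ℕ) : ℕ :=
  Nat.card {t : ℕ × ℕ × ℕ //
    0 < t.1 ∧ t.1 ≤ t.2.1 ∧ t.2.1 ≤ t.2.2 ∧ t.2.2 < t.1 + t.2.1 ∧ t.1 + t.2.1 + t.2.2 = p}

private lemma T_eq_PA (p : ℕ) : T p = (PA p).card := by
  rw [T]
  have h : ∀ t : ℕ × ℕ × ℕ,
      (0 < t.1 ∧ t.1 ≤ t.2.1 ∧ t.2.1 ≤ t.2.2 ∧ t.2.2 < t.1 + t.2.1 ∧ t.1 + t.2.1 + t.2.2 = p)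
      ↔ t ∈ PA p := fun t => mem_PA.symm
  rw [Nat.card_congr (Equiv.subtypeEquivRight h)]
  exact Nat.card_eq_finsetCard _

theorem integer_triangles_odd_perimeter (p : ℕ) (hp : 0 < p) (hodd : Odd p) :
    (T p : ℤ) = round (((p : ℚ) + 3) ^ 2 / 48) := by
  obtain ⟨k, hk⟩ := hodd
  have hmod : p % 2 = 1 := by omega
  set n := (p + 3) / 2 with hn
  have hT : T p = (n*n+6)/12 := by
    rw [T_eq_PA, PA_card_eq_PB p hmod, PB_card]
  rw [hT]
  have hpn : (p : ℚ) + 3 = 2 * n := by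
    have : p + 3 = 2 * n := by omega
    exact_mod_cast congrArg (fun x : ℕ => (x : ℚ)) this
  rw [hpn]
  have h1 : ((2 : ℚ) * n) ^ 2 / 48 = ((n*n : ℕ) : ℚ) / 12 := by push_cast; ring
  rw [h1, round_eq]
  have h2 : ((n*n : ℕ) : ℚ) / 12 + 1/2 = (((n*n+6 : ℕ) : ℤ) : ℚ) / (12 : ℕ) := by
    push_cast; ring
  rw [h2, Rat.floor_intCast_div_natCast]
  push_cast [Int.natCast_ediv]
  norm_num
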